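/- Let B be a nonempty finite index set and σ_X ≥ 0. Let (X_k)_{k∈B} and (Y_k)_{k∈B} be real random variables on a probability space such that for every k ∈ B: Y_k ≤ X_k almost surely, Y_k is integrable, X_k is square-integrable, E[X_k] = 0, and Var(X_k) ≤ σ_X². Then E[ max_{k∈B} Y_k ] ≤ 2 σ_X √(|B| − 1). -/

import Mathlib

open MeasureTheory ProbabilityTheory

lemma memLp_sup'_aux {Ω ι : Type*} [MeasurableSpace Ω] {μ : Measure Ω}
    (B : Finset ι) (h : B.Nonempty) (X : ι → Ω → ℝ)
    (hX : ∀ k ∈ B, MemLp (X k) 2 μ) :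
    MemLp (fun ω => B.sup' h fun k => X k ω) 2 μ := by
  induction h using Finset.Nonempty.cons_induction with
  | singleton c => exact hX c (by simp)
  | cons c s hcs hs ih =>
    have e : (fun ω => (Finset.cons c s hcs).sup' (Finset.cons_nonempty hcs) fun k => X k ω)
        = fun ω => X c ω ⊔ s.sup' hs fun k => X k ω :=
      funext fun ω => Finset.sup'_cons hs _
    rw [e]
    exact (hX c (by simp)).sup (ih fun k hk => hX k (Finset.mem_cons.2 (Or.inr hk)))

lemma integrable_sup'_aux {Ω ι : Type*} [MeasurableSpace Ω] {μ : Measure Ω}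
    (B : Finset ι) (h : B.Nonempty) (Y : ι → Ω → ℝ)
    (hY : ∀ k ∈ B, Integrable (Y k) μ) :
    Integrable (fun ω => B.sup' h fun k => Y k ω) μ := by
  induction h using Finset.Nonempty.cons_induction with
  | singleton c => exact hY c (by simp)
  | cons c s hcs hs ih =>
    have e : (fun ω => (Finset.cons c s hcs).sup' (Finset.cons_nonempty hcs) fun k => Y k ω)
        = fun ω => Y c ω ⊔ s.sup' hs fun k => Y k ω :=
      funext fun ω => Finset.sup'_cons hs _
    rw [e]
    exact (hY c (by simp)).sup (ih fun k hk => hY k (Finset.mem_cons.2 (Or.inr hk)))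

/-- If `Y_k ≤ X_k` a.s. with `E[X_k] = 0` and `Var(X_k) ≤ σX²` for all `k` in a
nonempty finite index set `B` (no independence assumed), then
`E[max_{k ∈ B} Y_k] ≤ 2 σX √(|B| - 1)`. -/
theorem stmt7 {Ω : Type*} {ι : Type*} [MeasurableSpace Ω] {μ : Measure Ω}
    [IsProbabilityMeasure μ]
    (B : Finset ι) (hBne : B.Nonempty)
    (σX : ℝ) (hσX : 0 ≤ σX)
    (X Y : ι → Ω → ℝ)
    (hYX : ∀ k ∈ B, ∀ᵐ ω ∂μ, Y k ω ≤ X k ω)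
    (hYint : ∀ k ∈ B, Integrable (Y k) μ)
    (hX2 : ∀ k ∈ B, MemLp (X k) 2 μ)
    (hXmean : ∀ k ∈ B, (∫ ω, X k ω ∂μ) = 0)
    (hXvar : ∀ k ∈ B, variance (X k) μ ≤ σX ^ 2) :
    (∫ ω, (B.sup' hBne fun k => Y k ω) ∂μ)
      ≤ 2 * σX * Real.sqrt ((B.card : ℝ) - 1) := by
  have hRHS : 0 ≤ 2 * σX * Real.sqrt ((B.card : ℝ) - 1) := by positivity
  have hMX : MemLp (fun ω => B.sup' hBne fun k => X k ω) 2 μ := memLp_sup'_aux B hBne X hX2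
  have hIX : Integrable (fun ω => B.sup' hBne fun k => X k ω) μ := hMX.integrable one_le_two
  -- Step 1: E sup Y ≤ E sup X
  have h1 : (∫ ω, (B.sup' hBne fun k => Y k ω) ∂μ)
      ≤ ∫ ω, (B.sup' hBne fun k => X k ω) ∂μ := by
    refine integral_mono_ae (integrable_sup'_aux B hBne Y hYint) hIX ?_
    filter_upwards [(ae_ball_iff B.countable_toSet).2 hYX] with ω hω
    exact Finset.sup'_mono_fun fun k hk => hω k hk
  refine h1.trans ?_
  set I := ∫ ω, (B.sup' hBne fun k => X k ω) ∂μ with hI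
  rcases le_or_gt I 0 with h0 | h0
  · exact h0.trans hRHS
  rcases eq_or_lt_of_le (Nat.one_le_iff_ne_zero.2 (Finset.card_ne_zero_of_mem hBne.choose_spec))
    with hc1 | hc2
  · -- card = 1 : then sup' X = X k with mean 0, contradicting I > 0
    obtain ⟨k, hk⟩ := Finset.card_eq_one.1 hc1.symm
    subst hk
    have : I = 0 := by
      rw [hI, show (fun ω => ({k} : Finset ι).sup' hBne fun j => X j ω) = X k from
        funext fun ω => Finset.sup'_singleton _]
      exact hXmean k (by simp)
    linarith
  -- card ≥ 2
  have hn : (2 : ℝ) ≤ (B.card : ℝ) := by exact_mod_cast hc2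
  -- I² ≤ ∫ (sup X)² ≤ ∑ E[X k²] ≤ n σ²
  have hsq : I ^ 2 ≤ ∫ ω, (B.sup' hBne fun k => X k ω) ^ 2 ∂μ := by
    have hv := variance_nonneg (fun ω => B.sup' hBne fun k => X k ω) μ
    rw [variance_eq_sub hMX] at hv
    have : (∫ ω, ((fun ω => B.sup' hBne fun k => X k ω) ^ 2) ω ∂μ)
        = ∫ ω, (B.sup' hBne fun k => X k ω) ^ 2 ∂μ := by rfl
    linarith [hv, this]
  have hsum : (∫ ω, (B.sup' hBne fun k => X k ω) ^ 2 ∂μ)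
      ≤ ∑ k ∈ B, ∫ ω, (X k ω) ^ 2 ∂μ := by
    rw [← integral_finset_sum B fun k hk => (hX2 k hk).integrable_sq]
    refine integral_mono hMX.integrable_sq
      (integrable_finset_sum B fun k hk => (hX2 k hk).integrable_sq) ?_
    intro ω
    obtain ⟨j, hj, hje⟩ := Finset.exists_mem_eq_sup' hBne fun k => X k ω
    simp only [hje]
    exact Finset.single_le_sum (fun k _ => sq_nonneg (X k ω)) hj
  have hvar : ∀ k ∈ B, (∫ ω, (X k ω) ^ 2 ∂μ) ≤ σX ^ 2 := by
    intro k hk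
    have := variance_eq_sub (hX2 k hk)
    rw [hXmean k hk] at this
    have h2 : (∫ ω, ((X k) ^ 2) ω ∂μ) = ∫ ω, (X k ω) ^ 2 ∂μ := rfl
    have := hXvar k hk
    nlinarith [variance_eq_sub (hX2 k hk), hXmean k hk]
  have hbound : I ^ 2 ≤ (B.card : ℝ) * σX ^ 2 := by
    calc I ^ 2 ≤ ∑ k ∈ B, ∫ ω, (X k ω) ^ 2 ∂μ := hsq.trans hsum
      _ ≤ ∑ _k ∈ B, σX ^ 2 := Finset.sum_le_sum hvar
      _ = (B.card : ℝ) * σX ^ 2 := by simp [mul_comm]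
  -- conclude
  have h2 : I ≤ Real.sqrt ((B.card : ℝ) * σX ^ 2) :=
    (Real.le_sqrt h0.le (by positivity)).2 hbound
  refine h2.trans ?_
  have e4 : Real.sqrt (4 * σX ^ 2 * ((B.card : ℝ) - 1))
      = 2 * σX * Real.sqrt ((B.card : ℝ) - 1) := by
    rw [show 4 * σX ^ 2 * ((B.card : ℝ) - 1) = (2 * σX) ^ 2 * ((B.card : ℝ) - 1) by ring,
      Real.sqrt_mul (by positivity), Real.sqrt_sq (by positivity)]
  rw [← e4]
  exact Real.sqrt_le_sqrt (by nlinarith)
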